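/- Let E = ℝ^p be a Euclidean space, θ̂ ∈ E, A : E → E a continuous linear map, D_n and D_c finite sets, and μ ≥ 0. For each z ∈ D_n, let f_z : E → ℝ be differentiable at θ̂ with 0 < f_z(θ̂) < 1; set L_z := (θ ↦ −log(f_z(θ))) and L_z^δ := (θ ↦ −log(1 − f_z(θ))). For each v ∈ D_c let g_v ∈ E, and define I_up(z, v) := ⟪g_v, A(∇L_z(θ̂))⟫ and I_rel(z, v) := ⟪g_v, A(∇L_z(θ̂) − ∇L_z^δ(θ̂))⟫. If Σ_{v ∈ D_c} (−I_up(z, v)) ≥ μ for every z ∈ D_n, then Σ_{z ∈ D_n} Σ_{v ∈ D_c} (I_up(z, v) − I_rel(z, v)) = Σ_{z ∈ D_n} (f_z(θ̂)/(1 − f_z(θ̂))) · Σ_{v ∈ D_c} (−I_up(z, v)) ≥ μ · Σ_{z ∈ D_n} f_z(θ̂)/(1 − f_z(θ̂)) ≥ 0. (This is the exact identity and inequality content of Theorem 3: relabelling a flagged multiclass node z of observed class m with the weighted label [0,…,φ_k(z),…,0], whose cross-entropy loss equals −log(1 − f_m(θ)), can lead to a lower approximate risk on the clean set than removing it.) 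-/

import Mathlib

open Real InnerProductSpace
open scoped RealInnerProductSpace

/-- Theorem 3 (multiclass case): relabelling a flagged node `z` of observed class
`m` with the weighted label (whose cross-entropy loss is `−log(1 − f_z(θ))`) can
lead to a lower approximate risk on the clean set than removing it:
`∑_z ∑_v (I_up − I_rel) = ∑_z (f_z/(1−f_z))·∑_v(−I_up) ≥ μ·∑_z f_z/(1−f_z) ≥ 0`. -/
theorem deglif_relabel_multiclass {p : ℕ} {α β : Type*}
    (Dn : Finset α) (Dc : Finset β)
    (θhat : EuclideanSpace ℝ (Fin p))
    (A : EuclideanSpace ℝ (Fin p) →L[ℝ] EuclideanSpace ℝ (Fin p))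
    (μ : ℝ) (hμ : 0 ≤ μ)
    (f : α → EuclideanSpace ℝ (Fin p) → ℝ)
    (hdiff : ∀ z ∈ Dn, DifferentiableAt ℝ (f z) θhat)
    (h0 : ∀ z ∈ Dn, 0 < f z θhat) (h1 : ∀ z ∈ Dn, f z θhat < 1)
    (g : β → EuclideanSpace ℝ (Fin p))
    (L Lδ : α → EuclideanSpace ℝ (Fin p) → ℝ)
    (hL : ∀ z ∈ Dn, L z = fun θ => -Real.log (f z θ))
    (hLδ : ∀ z ∈ Dn, Lδ z = fun θ => -Real.log (1 - f z θ))
    (Iup Irel : α → β → ℝ)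
    (hIup : ∀ z v, Iup z v = ⟪g v, A (gradient (L z) θhat)⟫)
    (hIrel : ∀ z v, Irel z v = ⟪g v, A (gradient (L z) θhat - gradient (Lδ z) θhat)⟫)
    (hflag : ∀ z ∈ Dn, μ ≤ ∑ v ∈ Dc, -(Iup z v)) :
    (∑ z ∈ Dn, ∑ v ∈ Dc, (Iup z v - Irel z v))
        = ∑ z ∈ Dn, (f z θhat / (1 - f z θhat)) * ∑ v ∈ Dc, -(Iup z v)
    ∧ μ * (∑ z ∈ Dn, f z θhat / (1 - f z θhat))
        ≤ ∑ z ∈ Dn, ∑ v ∈ Dc, (Iup z v - Irel z v)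
    ∧ 0 ≤ μ * (∑ z ∈ Dn, f z θhat / (1 - f z θhat)) := by
  -- key pointwise facts
  have key : ∀ z ∈ Dn, ∀ v ∈ Dc,
      Iup z v - Irel z v = (f z θhat / (1 - f z θhat)) * (-(Iup z v)) := by
    intro z hz v _
    have hfz := h0 z hz
    have hfz1 : (0:ℝ) < 1 - f z θhat := by linarith [h1 z hz]
    set c := f z θhat with hc
    have hF : HasFDerivAt (f z) (toDual ℝ _ (gradient (f z) θhat)) θhat :=
      ((hdiff z hz).hasGradientAt).hasFDerivAt
    -- gradient of L z
    have hGL : HasGradientAt (L z) ((-c⁻¹) • gradient (f z) θhat) θhat := by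
      rw [hasGradientAt_iff_hasFDerivAt, hL z hz, map_smul]
      have := (hF.log (ne_of_gt hfz)).neg
      refine this.congr_fderiv ?_
      ext w; simp [smul_smul, hc]
    have hGLδ : HasGradientAt (Lδ z) ((1 - c)⁻¹ • gradient (f z) θhat) θhat := by
      rw [hasGradientAt_iff_hasFDerivAt, hLδ z hz, map_smul]
      have hsub : HasFDerivAt (fun θ => 1 - f z θ)
          (-(toDual ℝ _ (gradient (f z) θhat))) θhat := by
        exact ((hasFDerivAt_const (1:ℝ) θhat).sub hF).congr_fderiv (by simp)
      have := (hsub.log (ne_of_gt hfz1)).neg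
      refine this.congr_fderiv ?_
      ext w; simp [smul_smul, hc]
    have e1 : gradient (L z) θhat = (-c⁻¹) • gradient (f z) θhat := hGL.gradient
    have e2 : gradient (Lδ z) θhat = (1 - c)⁻¹ • gradient (f z) θhat := hGLδ.gradient
    rw [hIup, hIrel, e1, e2]
    rw [map_sub, inner_sub_right, map_smul, map_smul, real_inner_smul_right,
      real_inner_smul_right]
    field_simp
    ring
  have eq1 : (∑ z ∈ Dn, ∑ v ∈ Dc, (Iup z v - Irel z v))
      = ∑ z ∈ Dn, (f z θhat / (1 - f z θhat)) * ∑ v ∈ Dc, -(Iup z v) := by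
    refine Finset.sum_congr rfl fun z hz => ?_
    rw [Finset.mul_sum]
    exact Finset.sum_congr rfl fun v hv => key z hz v hv
  have hr : ∀ z ∈ Dn, 0 ≤ f z θhat / (1 - f z θhat) := fun z hz =>
    div_nonneg (le_of_lt (h0 z hz)) (by linarith [h1 z hz])
  refine ⟨eq1, ?_, ?_⟩
  · rw [eq1, Finset.mul_sum]
    exact Finset.sum_le_sum fun z hz => by
      rw [mul_comm]
      exact mul_le_mul_of_nonneg_left (hflag z hz) (hr z hz)
  · exact mul_nonneg hμ (Finset.sum_nonneg hr)
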